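/- For all integers r ≥ 0 and 0 ≤ i ≤ r, let P(r,i) be the set of pairs (Z, f) where Z is a multiset of size r − i with elements in {1,…,r} and f is a function from {1,…,i} to {1,…,r}, such that for every k ∈ {1,…,r} one has (number of elements of Z that are ≤ k, counted with multiplicity) + #{ j ∈ {1,…,i} : f(j) ≤ k } ≥ k. Then (r+1) · |P(r,i)| = (r+1)^i · binom(2r − i, r); in particular, for i ≥ 1, |P(r,i)| = (r+1)^{i−1} · binom(2r − i, r). -/

import Mathlib

open Finset
open Fin.NatCast

namespace ParkAux

section Cycle

variable (g : ℕ → ℕ)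

/-- The walk `T t = (∑_{j<t} g j) - t`. -/
def TT (t : ℕ) : ℤ := (∑ j ∈ Finset.range t, g j : ℤ) - t

/-- `b` is a "good" starting point for the window of length `n-1`. -/
def Good (n b : ℕ) : Prop := ∀ t, b < t → t ≤ b + (n - 1) → TT g b ≤ TT g t

lemma TT_succ (t : ℕ) : TT g (t + 1) = TT g t + g t - 1 := by
  simp [TT, Finset.sum_range_succ]; ring

variable {g} {n : ℕ} (hn : 1 ≤ n) (hper : ∀ t, g (t + n) = g t)
  (hsum : ∑ j ∈ Finset.range n, g j = n - 1)

include hn hper hsum in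
lemma TT_period : ∀ t, TT g (t + n) = TT g t - 1 := by
  intro t
  induction t with
  | zero =>
    have hcast : (∑ j ∈ Finset.range n, g j : ℤ) = (n : ℤ) - 1 := by
      rw [← Nat.cast_sum, hsum]; push_cast [Nat.cast_sub hn]; ring
    simp [TT, hcast]
  | succ t ih =>
    have h1 : t + 1 + n = (t + n) + 1 := by ring
    rw [h1, TT_succ, ih, hper t, TT_succ]
    ring

include hn hper hsum in
lemma good_period (b : ℕ) : Good g n (b + n) ↔ Good g n b := by
  constructor
  · intro h t ht ht'
    have h2 := h (t + n) (by omega) (by omega)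
    rw [TT_period hn hper hsum, TT_period hn hper hsum] at h2
    omega
  · intro h t ht ht'
    have h2 := h (t - n) (by omega) (by omega)
    have h3 : t - n + n = t := by omega
    rw [TT_period hn hper hsum b, ← h3, TT_period hn hper hsum (t - n)]
    omega

include hn hper hsum in
lemma cycle_exists : ∃ b, b < n ∧ Good g n b := by
  classical
  obtain ⟨b0, hb0, hmin⟩ := Finset.exists_min_image (Finset.range n) (TT g) ⟨0, by simp; omega⟩
  -- take the least minimizer
  have hex : ∃ b, b ∈ Finset.range n ∧ ∀ s ∈ Finset.range n, TT g b ≤ TT g s := ⟨b0, hb0, hmin⟩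
  classical
  set P : ℕ → Prop := fun b => b ∈ Finset.range n ∧ ∀ s ∈ Finset.range n, TT g b ≤ TT g s with hP
  have hexP : ∃ b, P b := hex
  let b := Nat.find hexP
  have hPb : P b := Nat.find_spec hexP
  refine ⟨b, by simpa using hPb.1, ?_⟩
  intro t ht ht'
  by_cases hcase : t < n
  · exact hPb.2 t (by simp [hcase])
  · -- t ≥ n; let u = t - n < b
    have hu : t - n < b := by
      have := Finset.mem_range.mp hPb.1; omega
    have humem : t - n ∈ Finset.range n := by
      have := Finset.mem_range.mp hPb.1; simp; omega
    have hge : TT g b ≤ TT g (t - n) := hPb.2 _ humem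
    have hne : TT g (t - n) ≠ TT g b := by
      intro heq
      have : P (t - n) := ⟨humem, fun s hs => heq ▸ hPb.2 s hs⟩
      exact absurd (Nat.find_le this) (by omega)
    have h3 : t - n + n = t := by omega
    have := TT_period hn hper hsum (t - n)
    rw [h3] at this
    omega

include hn hper hsum in
lemma cycle_unique {b b' : ℕ} (hb : b < n) (hb' : b' < n)
    (h : Good g n b) (h' : Good g n b') : b = b' := by
  by_contra hne
  wlog hlt : b < b' generalizing b b'
  · exact this hb' hb h' h (Ne.symm hne) (by omega)
  have h1 : TT g b ≤ TT g b' := h b' (by omega) (by omega)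
  have h2 : TT g b' ≤ TT g (b + n) := h' (b + n) (by omega) (by omega)
  have h3 := TT_period hn hper hsum b
  omega




end Cycle

variable {r i : ℕ}

abbrev Omega (r i : ℕ) := Sym (Fin (r + 1)) (r - i) × (Fin i → Fin (r + 1))

def shift (a : Fin (r + 1)) (q : Omega r i) : Omega r i :=
  (q.1.map (fun v => v + a), fun j => q.2 j + a)

def Fv (q : Omega r i) (v : Fin (r + 1)) : ℕ :=
  Multiset.count v q.1.1 + (Finset.univ.filter fun j => q.2 j = v).card

def Fq (q : Omega r i) (t : ℕ) : ℕ := Fv q (t : Fin (r + 1))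

def cnt (q : Omega r i) (m : ℕ) : ℕ :=
  Multiset.card (q.1.1.filter (fun v : Fin (r+1) => (v : ℕ) ≤ m)) +
    (Finset.univ.filter fun j => ((q.2 j : ℕ)) ≤ m).card

def parkCond (q : Omega r i) : Prop := ∀ m, m < r → m + 1 ≤ cnt q m

lemma shift_shift (a b : Fin (r + 1)) (q : Omega r i) :
    shift a (shift b q) = shift (b + a) q := by
  unfold shift
  refine Prod.ext ?_ ?_
  · simp [Sym.map_map, Function.comp, add_assoc]
  · funext j; simp [add_assoc]

lemma shift_zero (q : Omega r i) : shift 0 q = q := by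
  unfold shift
  refine Prod.ext ?_ ?_
  · simp
  · funext j; simp

lemma sum_count_univ (s : Multiset (Fin (r + 1))) :
    ∑ v : Fin (r + 1), s.count v = Multiset.card s := by
  rw [← Multiset.toFinset_sum_count_eq s]
  exact (Finset.sum_subset (Finset.subset_univ _) (fun a _ ha =>
    Multiset.count_eq_zero.2 (fun h => ha (Multiset.mem_toFinset.2 h)))).symm

-- card of a filtered multiset over a fintype as a sum of counts
lemma card_filter_ms (p : Fin (r + 1) → Prop) [DecidablePred p]
    (s : Multiset (Fin (r + 1))) :
    Multiset.card (s.filter p) = ∑ a : Fin (r + 1), if p a then s.count a else 0 := by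
  rw [← sum_count_univ (s.filter p)]
  exact Finset.sum_congr rfl fun a _ => Multiset.count_filter

lemma cnt_eq_sum (q : Omega r i) {m : ℕ} (hm : m ≤ r) :
    cnt q m = ∑ t ∈ Finset.range (m + 1), Fq q t := by
  classical
  unfold cnt Fq Fv
  rw [Finset.sum_add_distrib]
  congr 1
  · rw [card_filter_ms]
    have hsf : (∑ a : Fin (r+1), if (a : ℕ) ≤ m then Multiset.count a q.1.1 else 0)
        = ∑ a ∈ Finset.univ.filter (fun a : Fin (r+1) => (a : ℕ) ≤ m), Multiset.count a q.1.1 :=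
      (Finset.sum_filter _ _).symm
    rw [hsf]
    refine Finset.sum_nbij' (fun a : Fin (r+1) => (a : ℕ)) (fun t : ℕ => (t : Fin (r + 1)))
      ?_ ?_ ?_ ?_ ?_
    · intro a ha
      simp only [Finset.mem_filter, Finset.mem_univ, true_and] at ha
      simp only [Finset.mem_range]; omega
    · intro t ht
      simp only [Finset.mem_range] at ht
      simp only [Finset.mem_filter, Finset.mem_univ, true_and]
      rw [Fin.val_cast_of_lt (by omega)]; omega
    · intro a _; simp [Fin.cast_val_eq_self]
    · intro t ht
      simp only [Finset.mem_range] at ht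
      show ((t : Fin (r+1)) : ℕ) = t
      rw [Fin.val_cast_of_lt (by omega)]
    · intro a _
      show Multiset.count a q.1.1 = Multiset.count ((a : ℕ) : Fin (r+1)) q.1.1
      rw [Fin.cast_val_eq_self]
  · -- function part
    rw [Finset.card_filter]
    have hr : ∀ t ∈ Finset.range (m + 1),
        (Finset.univ.filter fun j => q.2 j = (t : Fin (r + 1))).card
        = ∑ j : Fin i, if q.2 j = (t : Fin (r + 1)) then 1 else 0 := by
      intro t _; rw [Finset.card_filter]
    rw [Finset.sum_congr rfl hr, Finset.sum_comm]
    refine Finset.sum_congr rfl fun j _ => ?_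
    by_cases h : (q.2 j : ℕ) ≤ m
    · rw [if_pos h]
      symm
      rw [Finset.sum_eq_single_of_mem ((q.2 j : ℕ)) (by simp; omega)]
      · rw [if_pos (Fin.cast_val_eq_self _).symm]
      · intro t ht hne
        rw [if_neg]
        intro he
        apply hne
        rw [he, Fin.val_cast_of_lt (by simp at ht; omega)]
    · rw [if_neg h]
      symm
      refine Finset.sum_eq_zero fun t ht => ?_
      rw [if_neg]
      intro he
      apply h
      rw [he, Fin.val_cast_of_lt (by simp at ht; omega)]
      simp at ht; omega

lemma sum_Fv (hi : i ≤ r) (q : Omega r i) : ∑ v : Fin (r + 1), Fv q v = r := by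
  classical
  unfold Fv
  rw [Finset.sum_add_distrib, sum_count_univ, q.1.2]
  have h2 : ∑ v : Fin (r + 1), (Finset.univ.filter fun j => q.2 j = v).card = i := by
    have hr : ∀ v ∈ (Finset.univ : Finset (Fin (r+1))),
        (Finset.univ.filter fun j => q.2 j = v).card
        = ∑ j : Fin i, if q.2 j = v then 1 else 0 := fun v _ => Finset.card_filter _ _
    rw [Finset.sum_congr rfl hr, Finset.sum_comm]
    have : ∀ j ∈ (Finset.univ : Finset (Fin i)),
        (∑ v : Fin (r+1), if q.2 j = v then 1 else 0) = 1 := by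
      intro j _
      rw [Finset.sum_ite_eq]
      simp
    rw [Finset.sum_congr rfl this]
    simp
  rw [h2]; omega

lemma Fv_shift (a : Fin (r + 1)) (q : Omega r i) (v : Fin (r + 1)) :
    Fv (shift a q) v = Fv q (v - a) := by
  unfold Fv shift
  congr 1
  · have : (Sym.map (fun v => v + a) q.1).1 = q.1.1.map (fun v => v + a) := rfl
    rw [this]
    have hv : v = (fun x => x + a) (v - a) := by simp
    rw [hv, Multiset.count_map_eq_count' _ _ (add_left_injective a)]
    simp
  · congr 1
    apply Finset.filter_congr
    intro j _
    simp only [eq_comm (b := v)]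
    rw [eq_comm, eq_sub_iff_add_eq, eq_comm]

lemma Fq_per (q : Omega r i) (t : ℕ) : Fq q (t + (r + 1)) = Fq q t := by
  unfold Fq
  congr 1
  push_cast
  simp

lemma Fq_shift (a : Fin (r + 1)) (q : Omega r i) (t : ℕ) :
    Fq (shift a q) t = Fq q (t + ((r + 1) - (a : ℕ))) := by
  unfold Fq
  rw [Fv_shift]
  congr 1
  have h1 : (((r + 1) - (a : ℕ) : ℕ) : Fin (r + 1)) = -a := by
    have h2 : (((r + 1) - (a : ℕ) : ℕ) : Fin (r + 1)) + ((a : ℕ) : Fin (r+1)) = 0 := by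
      rw [← Nat.cast_add, Nat.sub_add_cancel (le_of_lt a.isLt)]
      exact Fin.natCast_self _
    rw [Fin.cast_val_eq_self] at h2
    linear_combination (norm := abel) h2
  push_cast
  rw [h1, sub_eq_add_neg]

lemma parkCond_shift_iff (a : Fin (r + 1)) (q : Omega r i) :
    parkCond (shift a q) ↔ Good (Fq q) (r + 1) ((r + 1) - (a : ℕ)) := by
  set c := (r + 1) - (a : ℕ) with hc
  have hstep : ∀ m, m ≤ r →
      ((m + 1 ≤ cnt (shift a q) m) ↔ TT (Fq q) c ≤ TT (Fq q) (c + m + 1)) := by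
    intro m hm
    rw [cnt_eq_sum _ hm]
    have h1 : ∑ t ∈ Finset.range (m + 1), Fq (shift a q) t
        = ∑ t ∈ Finset.Ico c (c + (m + 1)), Fq q t := by
      rw [Finset.sum_Ico_eq_sum_range]
      have h2 : c + (m + 1) - c = m + 1 := by omega
      rw [h2]
      exact Finset.sum_congr rfl fun t _ => by rw [Fq_shift, add_comm]
    have h3 : (∑ t ∈ Finset.range c, Fq q t) + (∑ t ∈ Finset.Ico c (c + (m + 1)), Fq q t)
        = ∑ t ∈ Finset.range (c + (m + 1)), Fq q t := by
      rw [Finset.range_eq_Ico, Finset.range_eq_Ico]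
      exact Finset.sum_Ico_consecutive (Fq q) (m := 0) (n := c) (k := c + (m + 1)) (by omega) (by omega)
    rw [h1]
    have hTT : ∀ t, TT (Fq q) t = ((∑ j ∈ Finset.range t, Fq q j : ℕ) : ℤ) - t := by
      intro t; unfold TT; push_cast; ring
    have h4 : c + m + 1 = c + (m + 1) := by omega
    rw [h4, hTT, hTT]
    omega
  constructor
  · intro h t ht ht'
    have hr1 : r + 1 - 1 = r := by omega
    rw [hr1] at ht'
    set m := t - c - 1 with hmdef
    have hm : m ≤ r := by omega
    have hteq : t = c + m + 1 := by omega
    rw [hteq]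
    by_cases hmr : m < r
    · exact (hstep m hm).mp (h m hmr)
    · -- m = r: then t = c + r + 1; but t ≤ c + r, contradiction
      omega
  · intro h m hm
    refine (hstep m (by omega)).mpr ?_
    exact h (c + m + 1) (by omega) (by omega)


lemma sum_Fq_range (hi : i ≤ r) (q : Omega r i) :
    ∑ t ∈ Finset.range (r + 1), Fq q t = r := by
  rw [← Fin.sum_univ_eq_sum_range (fun t => Fq q t) (r + 1)]
  have heach : ∀ v ∈ (Finset.univ : Finset (Fin (r+1))), Fq q (v : ℕ) = Fv q v := by
    intro v _; unfold Fq; rw [Fin.cast_val_eq_self]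
  rw [Finset.sum_congr rfl heach]
  exact sum_Fv hi q

lemma sum_Fq_range' (hi : i ≤ r) (q : Omega r i) :
    ∑ t ∈ Finset.range (r + 1), Fq q t = (r + 1) - 1 := by
  rw [sum_Fq_range hi q]; omega

/-- the key criterion with a negative shift -/
lemma goodA (hi : i ≤ r) (a : Fin (r + 1)) (q : Omega r i) :
    parkCond (shift (-a) q) ↔ Good (Fq q) (r + 1) (a : ℕ) := by
  rw [parkCond_shift_iff]
  have hper := Fq_per q
  have hsum := sum_Fq_range' hi q
  have hn : 1 ≤ r + 1 := by omega
  by_cases ha : (a : ℕ) = 0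
  · have h0 : (-a : Fin (r+1)) = a := by
      have : a = 0 := by ext; simpa using ha
      rw [this]; simp
    rw [h0, ha]
    have h3 := good_period hn hper hsum 0
    simpa using h3
  · have h1 : ((-a : Fin (r+1)) : ℕ) = (r + 1) - (a : ℕ) := by
      rw [Fin.coe_neg]
      exact Nat.mod_eq_of_lt (by have := a.isLt; omega)
    rw [h1]
    have h2 : r + 1 - (r + 1 - (a : ℕ)) = (a : ℕ) := by have := a.isLt; omega
    rw [h2]

def Park (r i : ℕ) := {q : Omega r i // parkCond q}

noncomputable instance : Fintype (Park r i) := by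
  classical
  unfold Park
  infer_instance

def A (x : Fin (r + 1) × Park r i) : Omega r i := shift x.1 x.2.1

lemma shift_cancel (a : Fin (r + 1)) (x : Omega r i) : shift (-a) (shift a x) = x := by
  rw [shift_shift, add_neg_cancel, shift_zero]

lemma shift_cancel' (a : Fin (r + 1)) (x : Omega r i) : shift a (shift (-a) x) = x := by
  rw [shift_shift, neg_add_cancel, shift_zero]

lemma A_bijective (hi : i ≤ r) : Function.Bijective (A (r := r) (i := i)) := by
  have hn : 1 ≤ r + 1 := by omega
  constructor
  · rintro ⟨a, p⟩ ⟨a', p'⟩ h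
    unfold A at h
    simp only at h
    have h1 : parkCond (shift (-a) (shift a p.1)) := by rw [shift_cancel]; exact p.2
    have h2 : parkCond (shift (-a') (shift a p.1)) := by rw [h, shift_cancel]; exact p'.2
    rw [goodA hi] at h1 h2
    have hval : (a : ℕ) = (a' : ℕ) :=
      cycle_unique hn (Fq_per (shift a p.1)) (sum_Fq_range' hi (shift a p.1))
        a.isLt a'.isLt h1 h2
    have haa : a = a' := Fin.ext hval
    subst haa
    have hpp : p.1 = p'.1 := by
      have := congrArg (shift (-a)) h
      rwa [shift_cancel, shift_cancel] at this
    simp [Prod.ext_iff, Subtype.ext hpp]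
  · intro Q
    obtain ⟨b, hb, hgood⟩ := cycle_exists hn (Fq_per Q) (sum_Fq_range' hi Q)
    set a : Fin (r + 1) := ⟨b, hb⟩ with hadef
    have hval : (a : ℕ) = b := rfl
    have hpark : parkCond (shift (-a) Q) := by
      rw [goodA hi, hval]; exact hgood
    exact ⟨⟨a, ⟨shift (-a) Q, hpark⟩⟩, shift_cancel' a Q⟩

lemma card_omega (hi : i ≤ r) :
    Nat.card (Omega r i) = (2 * r - i).choose r * (r + 1) ^ i := by
  classical
  rw [Nat.card_eq_fintype_card]
  rw [Fintype.card_prod]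
  congr 1
  · rw [Sym.card_sym_eq_choose]
    have h1 : Fintype.card (Fin (r + 1)) + (r - i) - 1 = 2 * r - i := by
      simp [Fintype.card_fin]; omega
    rw [h1]
    have h2 : r - i = (2 * r - i) - r := by omega
    rw [h2, Nat.choose_symm (by omega)]
  · simp

lemma card_park (hi : i ≤ r) :
    (r + 1) * Nat.card (Park r i) = (2 * r - i).choose r * (r + 1) ^ i := by
  rw [← card_omega hi, ← Nat.card_eq_of_bijective _ (A_bijective hi), Nat.card_prod,
    Nat.card_eq_fintype_card (α := Fin (r + 1)), Fintype.card_fin]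

lemma bound_of_park (hi : i ≤ r) {q : Omega r i} (hq : parkCond q) :
    (∀ v ∈ q.1.1, (v : ℕ) + 1 ≤ r) ∧ (∀ j : Fin i, (q.2 j : ℕ) + 1 ≤ r) := by
  rcases Nat.eq_zero_or_pos r with hr | hr
  · subst hr
    have hi0 : i = 0 := by omega
    constructor
    · intro v hv
      have hc : Multiset.card q.1.1 = 0 := by rw [q.1.2]; omega
      rw [Multiset.card_eq_zero] at hc
      rw [hc] at hv
      simp at hv
    · intro j; subst hi0; exact absurd j.isLt (by omega)
  · have hm := hq (r - 1) (by omega)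
    unfold cnt at hm
    have hA : Multiset.card (q.1.1.filter (fun v : Fin (r+1) => (v : ℕ) ≤ r - 1))
        ≤ Multiset.card q.1.1 := Multiset.card_le_card (Multiset.filter_le _ _)
    have hB : (Finset.univ.filter fun j => ((q.2 j : ℕ)) ≤ r - 1).card ≤ i := by
      calc _ ≤ (Finset.univ : Finset (Fin i)).card := Finset.card_filter_le _ _
        _ = i := by simp
    rw [q.1.2] at hA
    have h1 : r - 1 + 1 = r := by omega
    have hAeq : Multiset.card (q.1.1.filter (fun v : Fin (r+1) => (v : ℕ) ≤ r - 1))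
        = r - i := by omega
    have hBeq : (Finset.univ.filter fun j => ((q.2 j : ℕ)) ≤ r - 1).card = i := by omega
    constructor
    · intro v hv
      have hfe : q.1.1.filter (fun v : Fin (r+1) => (v : ℕ) ≤ r - 1) = q.1.1 := by
        apply Multiset.eq_of_le_of_card_le (Multiset.filter_le _ _)
        rw [q.1.2, hAeq]
      have := (Multiset.filter_eq_self.mp hfe) v hv
      omega
    · intro j
      have hfe : (Finset.univ.filter fun j => ((q.2 j : ℕ)) ≤ r - 1) = Finset.univ := by
        apply Finset.eq_univ_of_card
        rw [hBeq]; simp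
      have : j ∈ Finset.univ.filter fun j => ((q.2 j : ℕ)) ≤ r - 1 := by
        rw [hfe]; exact Finset.mem_univ j
      have := (Finset.mem_filter.mp this).2
      omega

/-- The predicate in `parkPairs`. -/
def PP (r i : ℕ) :=
  {p : Multiset ℕ × (Fin i → ℕ) //
    Multiset.card p.1 = r - i ∧ (∀ z ∈ p.1, 1 ≤ z ∧ z ≤ r) ∧
    (∀ j, 1 ≤ p.2 j ∧ p.2 j ≤ r) ∧
    (∀ k : ℕ, 1 ≤ k → k ≤ r →
      k ≤ Multiset.card (p.1.filter (fun z => z ≤ k)) +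
          (Finset.univ.filter (fun j => p.2 j ≤ k)).card)}

def E (hi : i ≤ r) (q : Park r i) : PP r i := by
  refine ⟨(q.1.1.1.map (fun v : Fin (r+1) => (v : ℕ) + 1), fun j => (q.1.2 j : ℕ) + 1), ?_, ?_, ?_, ?_⟩
  · rw [Multiset.card_map, q.1.1.2]
  · intro z hz
    rw [Multiset.mem_map] at hz
    obtain ⟨v, hv, rfl⟩ := hz
    have := (bound_of_park hi q.2).1 v hv
    omega
  · intro j
    have := (bound_of_park hi q.2).2 j
    dsimp only
    omega
  · intro k hk1 hkr
    have hq := q.2 (k - 1) (by omega)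
    unfold cnt at hq
    have hA : Multiset.card ((q.1.1.1.map (fun v : Fin (r+1) => (v : ℕ) + 1)).filter
          (fun z => z ≤ k))
        = Multiset.card (q.1.1.1.filter (fun v : Fin (r+1) => (v : ℕ) ≤ k - 1)) := by
      rw [Multiset.filter_map, Multiset.card_map]
      congr 1
      apply Multiset.filter_congr
      intro v _
      show (v : ℕ) + 1 ≤ k ↔ (v : ℕ) ≤ k - 1
      omega
    have hB : (Finset.univ.filter fun j => ((q.1.2 j : ℕ)) + 1 ≤ k).card
        = (Finset.univ.filter fun j => ((q.1.2 j : ℕ)) ≤ k - 1).card := by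
      congr 1
      apply Finset.filter_congr
      intro j _
      show ((q.1.2 j : ℕ) + 1 ≤ k) ↔ ((q.1.2 j : ℕ) ≤ k - 1)
      omega
    simp only at hA hB ⊢
    rw [hA, hB]
    omega

lemma E_bijective (hi : i ≤ r) : Function.Bijective (E hi) := by
  constructor
  · rintro ⟨⟨s, f⟩, hq⟩ ⟨⟨s', f'⟩, hq'⟩ h
    have h1 : s.1.map (fun v : Fin (r+1) => (v : ℕ) + 1)
        = s'.1.map (fun v : Fin (r+1) => (v : ℕ) + 1) :=
      congrArg (fun x : PP r i => x.1.1) h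
    have h2 : (fun j => ((f j : ℕ) + 1)) = (fun j => ((f' j : ℕ) + 1)) :=
      congrArg (fun x : PP r i => x.1.2) h
    have hinj : Function.Injective (fun v : Fin (r+1) => (v : ℕ) + 1) := by
      intro a b hab
      simp only at hab
      exact Fin.ext (by omega)
    have hs : s.1 = s'.1 := Multiset.map_injective hinj h1
    have hf : f = f' := by
      funext j
      have := congrFun h2 j
      exact Fin.ext (by omega)
    apply Subtype.ext
    simp [Prod.ext_iff, Subtype.ext hs, hf]
  · rintro ⟨⟨Z, f⟩, hcard, hZ, hf, hcond⟩
    simp only at hcard hZ hf hcond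
    refine ⟨⟨⟨⟨Z.map (fun z => ((z - 1 : ℕ) : Fin (r + 1))), ?_⟩,
      fun j => ((f j - 1 : ℕ) : Fin (r + 1))⟩, ?_⟩, ?_⟩
    · rw [Multiset.card_map]; exact hcard
    · -- parkCond
      intro m hm
      unfold cnt
      simp only
      have hA : Multiset.card ((Z.map (fun z => ((z - 1 : ℕ) : Fin (r + 1)))).filter
            (fun v : Fin (r+1) => (v : ℕ) ≤ m))
          = Multiset.card (Z.filter (fun z => z ≤ m + 1)) := by
        rw [Multiset.filter_map, Multiset.card_map]
        congr 1
        apply Multiset.filter_congr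
        intro z hz
        have hb := hZ z hz
        show (((z - 1 : ℕ) : Fin (r + 1)) : ℕ) ≤ m ↔ z ≤ m + 1
        rw [Fin.val_cast_of_lt (by omega)]
        omega
      have hB : (Finset.univ.filter fun j => ((((f j - 1 : ℕ) : Fin (r + 1)) : ℕ)) ≤ m).card
          = (Finset.univ.filter fun j => f j ≤ m + 1).card := by
        congr 1
        apply Finset.filter_congr
        intro j _
        have hb := hf j
        show ((((f j - 1 : ℕ) : Fin (r + 1)) : ℕ) ≤ m) ↔ (f j ≤ m + 1)
        rw [Fin.val_cast_of_lt (by omega)]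
        omega
      rw [hA, hB]
      exact hcond (m + 1) (by omega) (by omega)
    · -- E of this equals the original
      apply Subtype.ext
      unfold E
      simp only
      refine Prod.ext ?_ ?_
      · show (Z.map (fun z => ((z - 1 : ℕ) : Fin (r + 1)))).map (fun v : Fin (r+1) => (v : ℕ) + 1) = Z
        rw [Multiset.map_map]
        have : Z.map ((fun v : Fin (r+1) => (v : ℕ) + 1) ∘ (fun z => ((z - 1 : ℕ) : Fin (r + 1))))
            = Z.map id := by
          apply Multiset.map_congr rfl
          intro z hz
          have hb := hZ z hz
          show (((z - 1 : ℕ) : Fin (r + 1)) : ℕ) + 1 = z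
          rw [Fin.val_cast_of_lt (by omega)]
          omega
        rw [this, Multiset.map_id]
      · funext j
        show ((((f j - 1 : ℕ) : Fin (r + 1)) : ℕ)) + 1 = f j
        have hb := hf j
        rw [Fin.val_cast_of_lt (by omega)]
        omega

end ParkAux

/-- `parkPairs r i` is the number of parking preference pairs `(Z, f)` where `Z` is a
multiset of size `r - i` with elements in `{1,…,r}` (motorcycle preferences) and
`f : {1,…,i} → {1,…,r}` (car preferences), such that for every `k ∈ {1,…,r}`, the number
of elements of `Z` that are `≤ k` plus the number of `j` with `f j ≤ k` is at least `k`. -/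
noncomputable def parkPairs (r i : ℕ) : ℕ :=
  Nat.card {p : Multiset ℕ × (Fin i → ℕ) //
    Multiset.card p.1 = r - i ∧ (∀ z ∈ p.1, 1 ≤ z ∧ z ≤ r) ∧
    (∀ j, 1 ≤ p.2 j ∧ p.2 j ≤ r) ∧
    (∀ k : ℕ, 1 ≤ k → k ≤ r →
      k ≤ Multiset.card (p.1.filter (fun z => z ≤ k)) +
          (Finset.univ.filter (fun j => p.2 j ≤ k)).card)}

lemma parkPairs_eq {r i : ℕ} (hi : i ≤ r) :
    parkPairs r i = Nat.card (ParkAux.Park r i) := by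
  have h0 : parkPairs r i = Nat.card (ParkAux.PP r i) := rfl
  rw [h0]
  exact (Nat.card_eq_of_bijective _ (ParkAux.E_bijective hi)).symm

theorem stmt4 (r i : ℕ) (hi : i ≤ r) :
    (r + 1) * parkPairs r i = (r + 1) ^ i * Nat.choose (2 * r - i) r ∧
    (1 ≤ i → parkPairs r i = (r + 1) ^ (i - 1) * Nat.choose (2 * r - i) r) := by
  have hmain : (r + 1) * parkPairs r i = (r + 1) ^ i * Nat.choose (2 * r - i) r := by
    rw [parkPairs_eq hi, ParkAux.card_park hi, Nat.mul_comm]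
  refine ⟨hmain, fun h1 => ?_⟩
  have hpow : (r + 1) ^ i = (r + 1) * (r + 1) ^ (i - 1) := by
    conv_lhs => rw [show i = (i - 1) + 1 by omega]
    rw [pow_succ]
    ring
  rw [hpow, mul_assoc] at hmain
  exact Nat.eq_of_mul_eq_mul_left (by omega) hmain
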